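/- For type D_n, let μ be an admissible pattern (1 ≤ μ_1 ≤ n−1, 0 ≤ μ_k ≤ μ_{k−1}−1) with l = max{k : μ_k ≠ 0}. Then φ^{(μ)}X = Σ_{k=1}^{l} ( X_{μ_k+k−1; n−μ_k−1} − X_{μ_k+k−1; n−μ_k} ) if μ_l = 1, and φ^{(μ)}X = Σ_{k=1}^{l} ( X_{μ_k+k−1; n−μ_k−1} − X_{μ_k+k−1; n−μ_k} ) + X_{l;n} if μ_l ≥ 2, where X_{j;n−1} = x_{j;n} and X_{j;n} = x_{j;n−1} for j even, and X_{j;i} = x_{j;i} otherwise. -/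

import Mathlib

open scoped Classical

noncomputable section

/-- position (j;i) ↦ (j-1)*n + i in the singly-indexed lattice. -/
def pos (n j i : ℕ) : ℕ := (j - 1) * n + i

/-- the cyclic sequence ι = (…, n, …, 2, 1, n, …, 2, 1): position k ≥ 1 carries index ((k-1) % n)+1. -/
def iotaSeq (n k : ℕ) : ℕ := (k - 1) % n + 1

variable {I : Type*}

/-- σ_k(x) = x_k + Σ_{j>k} ⟨h_{i_k}, α_{i_j}⟩ x_j. -/
def sigmaPL (a : I → I → ℤ) (ι : ℕ → I) (x : ℕ → ℤ) (k : ℕ) : ℤ :=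
  x k + ∑' j : ℕ, if k < j then a (ι k) (ι j) * x j else 0
/-- k^{(+)}: the next position after k carrying the same index. -/
def kplus (ι : ℕ → I) (k : ℕ) : ℕ := sInf {l | k < l ∧ ι l = ι k}

/-- k^{(-)}: the previous position (≥ 1) carrying the same index, 0 if none. -/
def kminus (ι : ℕ → I) (k : ℕ) : ℕ := sSup {l | 0 < l ∧ l < k ∧ ι l = ι k}

/-- coefficient vector of the linear form β_k = x_k + Σ_{k<j<k^{(+)}} ⟨h_{i_k},α_{i_j}⟩ x_j + x_{k^{(+)}},
with β_0 = 0. -/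
def betaF (a : I → I → ℤ) (ι : ℕ → I) (k : ℕ) : ℕ → ℚ := fun j =>
  if k = 0 then 0 else
    (if j = k then 1 else 0)
    + (if k < j ∧ j < kplus ι k then (a (ι k) (ι j) : ℚ) else 0)
    + (if j = kplus ι k then 1 else 0)

/-- the piecewise-linear operator S_k on linear forms (coefficient vectors). -/
def Sop (a : I → I → ℤ) (ι : ℕ → I) (k : ℕ) (φ : ℕ → ℚ) : ℕ → ℚ :=
  if 0 < φ k then φ - φ k • betaF a ι k else φ - φ k • betaF a ι (kminus ι k)

/-- evaluation of a linear form at a point of ℤ^∞. -/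
def evalF (φ : ℕ → ℚ) (x : ℕ → ℤ) : ℚ := ∑' l : ℕ, φ l * (x l : ℚ)

/-- the coordinate linear form x_m. -/
def coordF (m : ℕ) : ℕ → ℚ := fun l => if l = m then 1 else 0

/-- the coordinate linear form x_{j;i}, with the convention x_{j;0} = x_{j;n+1} = 0. -/
def cX (n j i : ℕ) : ℕ → ℚ :=
  if 1 ≤ j ∧ 1 ≤ i ∧ i ≤ n then coordF (pos n j i) else 0
/-- Cartan matrix of type B_n: a_{n-1,n} = -2, a_{n,n-1} = -1. -/
def aB (n : ℕ) (i j : ℕ) : ℤ :=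
  if i = j then 2
  else if i + 1 = j then (if j = n then -2 else -1)
  else if j + 1 = i then -1
  else 0

/-- Cartan matrix of type C_n: a_{n-1,n} = -1, a_{n,n-1} = -2. -/
def aC (n : ℕ) (i j : ℕ) : ℤ :=
  if i = j then 2
  else if i + 1 = j then -1
  else if j + 1 = i then (if i = n then -2 else -1)
  else 0

/-- Cartan matrix of type D_n. -/
def aD (n : ℕ) (i j : ℕ) : ℤ :=
  if i = j then 2
  else if (i + 1 = j ∧ j + 1 ≤ n) ∨ (j + 1 = i ∧ i + 1 ≤ n)
        ∨ (i + 2 = j ∧ j = n) ∨ (j + 2 = i ∧ i = n) then -1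
  else 0

/-- Cartan matrix of type F_4: a_{23} = -2, a_{32} = -1. -/
def aF4 (i j : ℕ) : ℤ :=
  if i = j then 2
  else if i = 2 ∧ j = 3 then -2
  else if i + 1 = j ∨ j + 1 = i then -1
  else 0
/-- S^{(μ_1)} chain for D_n: t-th step applies S_{t;n-1-t}. -/
def chain1D (n : ℕ) : ℕ → (ℕ → ℚ) → (ℕ → ℚ)
  | 0 => id
  | t + 1 => fun φ => Sop (aD n) (iotaSeq n) (pos n (t + 1) (n - 1 - (t + 1))) (chain1D n t φ)

/-- S^{(μ_k)} chain (k ≥ 2) for D_n: first step S_{k-1;n} (k even) or S_{k-1;n-1} (k odd),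
then step t applies S_{k-1+t;n-1-t}. -/
def chainKD (n k : ℕ) : ℕ → (ℕ → ℚ) → (ℕ → ℚ)
  | 0 => id
  | 1 => fun φ => Sop (aD n) (iotaSeq n) (pos n (k - 1) (if k % 2 = 0 then n else n - 1)) φ
  | t + 2 => fun φ =>
      Sop (aD n) (iotaSeq n) (pos n (k - 1 + (t + 1)) (n - 1 - (t + 1))) (chainKD n k (t + 1) φ)

/-- φ^{(μ)} for D_n. -/
def phiMuD (n : ℕ) (μ : ℕ → ℕ) : ℕ → (ℕ → ℚ) → (ℕ → ℚ)
  | 0 => id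
  | 1 => fun φ => if μ 1 = 1 then φ else chain1D n (μ 1 - 1) φ
  | k + 2 => fun φ => chainKD n (k + 2) (μ (k + 2)) (phiMuD n μ (k + 1) φ)

/-- admissible pattern: 1 ≤ μ_1 ≤ m, and 0 ≤ μ_k ≤ μ_{k-1} - 1 for k ≥ 2. -/
def AdmissiblePat (m : ℕ) (μ : ℕ → ℕ) : Prop :=
  1 ≤ μ 1 ∧ μ 1 ≤ m ∧ ∀ k, 2 ≤ k → (μ k = 0 ∨ μ k + 1 ≤ μ (k - 1))
/-- X = x_{1;n-2} - x_{1;n-1} for type D_n. -/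
def XformD (n : ℕ) : ℕ → ℚ := cX n 1 (n - 2) - cX n 1 (n - 1)

/-- X_{j;n-1} = x_{j;n} and X_{j;n} = x_{j;n-1} for j even, X_{j;i} = x_{j;i} otherwise. -/
def capXD (n j i : ℕ) : ℕ → ℚ :=
  if j % 2 = 0 ∧ i = n - 1 then cX n j n
  else if j % 2 = 0 ∧ i = n then cX n j (n - 1)
  else cX n j i

lemma pos_inj {n j i j' i' : ℕ} (hj : 1 ≤ j) (hj' : 1 ≤ j') (hi : 1 ≤ i) (hin : i ≤ n)
    (hi' : 1 ≤ i') (hin' : i' ≤ n) (h : pos n j i = pos n j' i') : j = j' ∧ i = i' := by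
  obtain ⟨a, rfl⟩ : ∃ a, j = a + 1 := ⟨j - 1, by omega⟩
  obtain ⟨b, rfl⟩ : ∃ b, j' = b + 1 := ⟨j' - 1, by omega⟩
  simp only [pos, Nat.add_sub_cancel] at h
  rcases Nat.lt_trichotomy a b with hab | rfl | hab
  · have h3 : a * n + n ≤ b * n := by
      have := Nat.mul_le_mul_right n (Nat.succ_le_of_lt hab)
      simpa [Nat.succ_mul] using this
    omega
  · omega
  · have h3 : b * n + n ≤ a * n := by
      have := Nat.mul_le_mul_right n (Nat.succ_le_of_lt hab)
      simpa [Nat.succ_mul] using this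
    omega

lemma iota_pos (n j i : ℕ) (hi : 1 ≤ i) (hin : i ≤ n) : iotaSeq n (pos n j i) = i := by
  unfold iotaSeq pos
  have h1 : (j-1)*n + i - 1 = (i-1) + (j-1)*n := by omega
  rw [h1, Nat.add_mul_mod_self_right, Nat.mod_eq_of_lt (by omega)]
  omega

lemma kplus_pos (n j i : ℕ) (hn : 1 ≤ n) (hj : 1 ≤ j) (hi : 1 ≤ i) (hin : i ≤ n) :
    kplus (iotaSeq n) (pos n j i) = pos n (j+1) i := by
  have hpn : pos n (j+1) i = pos n j i + n := by
    obtain ⟨a, rfl⟩ : ∃ a, j = a + 1 := ⟨j - 1, by omega⟩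
    simp only [pos, Nat.add_sub_cancel, Nat.add_mul]
    omega
  have hmem : pos n (j+1) i ∈ {l | pos n j i < l ∧ iotaSeq n l = iotaSeq n (pos n j i)} := by
    constructor
    · omega
    · rw [iota_pos n (j+1) i hi hin, iota_pos n j i hi hin]
  apply le_antisymm
  · exact Nat.sInf_le hmem
  · apply le_csInf ⟨_, hmem⟩
    rintro l ⟨hl1, hl2⟩
    rw [iota_pos n j i hi hin] at hl2
    -- l > pos n j i, iotaSeq n l = i
    by_contra hlt
    push_neg at hlt
    -- pos n j i < l < pos n j i + n
    have hk1 : 1 ≤ pos n j i := by unfold pos; omega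
    have hmod : (l - 1) % n = (pos n j i - 1) % n := by
      have h2 : (pos n j i - 1) % n = i - 1 := by
        have h1 : pos n j i - 1 = (i-1) + (j-1)*n := by unfold pos; omega
        rw [h1, Nat.add_mul_mod_self_right, Nat.mod_eq_of_lt (by omega)]
      unfold iotaSeq at hl2
      omega
    have hdvd : n ∣ (l - 1) - (pos n j i - 1) := (Nat.modEq_iff_dvd' (by omega)).mp hmod.symm
    have := Nat.le_of_dvd (by omega) hdvd
    omega

lemma cX_apply (n j i j' i' : ℕ) (hj' : 1 ≤ j') (hi' : 1 ≤ i') (hin' : i' ≤ n) :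
    cX n j i (pos n j' i') = if j = j' ∧ i = i' then 1 else 0 := by
  by_cases hv : 1 ≤ j ∧ 1 ≤ i ∧ i ≤ n
  · rw [cX, if_pos hv]
    unfold coordF
    by_cases h : j = j' ∧ i = i'
    · obtain ⟨rfl, rfl⟩ := h; simp
    · rw [if_neg h, if_neg]
      intro hp
      exact h ⟨(pos_inj hj' hv.1 hi' hin' hv.2.1 hv.2.2 hp).1.symm,
               (pos_inj hj' hv.1 hi' hin' hv.2.1 hv.2.2 hp).2.symm⟩
  · rw [cX, if_neg hv, if_neg]
    · rfl
    · rintro ⟨rfl, rfl⟩; exact hv ⟨hj', hi', hin'⟩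

lemma cX_apply_raw (n j i m : ℕ) :
    cX n j i m = if 1 ≤ j ∧ 1 ≤ i ∧ i ≤ n ∧ m = pos n j i then 1 else 0 := by
  by_cases hv : 1 ≤ j ∧ 1 ≤ i ∧ i ≤ n
  · rw [cX, if_pos hv]; unfold coordF
    by_cases hm : m = pos n j i
    · rw [if_pos hm, if_pos ⟨hv.1, hv.2.1, hv.2.2, hm⟩]
    · rw [if_neg hm, if_neg (by tauto)]
  · rw [cX, if_neg hv, if_neg (by tauto)]; rfl




def betaD (n j i : ℕ) : ℕ → ℚ :=
  cX n j i + cX n (j+1) i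
  - (if i + 2 ≤ n then cX n j (i+1) else 0)
  - (if i + 2 = n then cX n j n else 0)
  - (if i = n then cX n (j+1) (n-2) else cX n (j+1) (i-1))

set_option maxHeartbeats 3200000 in
lemma betaF_pos_eq (n j i : ℕ) (hn : 4 ≤ n) (hj : 1 ≤ j) (hi : 1 ≤ i) (hin : i ≤ n) :
    betaF (aD n) (iotaSeq n) (pos n j i) = betaD n j i := by
  have hjn : j * n = (j - 1) * n + n := by
    obtain ⟨a, rfl⟩ : ∃ a, j = a + 1 := ⟨j - 1, by omega⟩
    simp [Nat.add_mul]
  have hk0 : pos n j i ≠ 0 := by simp only [pos]; omega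
  have hpn : pos n (j+1) i = pos n j i + n := by
    simp only [pos, Nat.add_sub_cancel]; omega
  have b1 : pos n j (i+1) = pos n j i + 1 := by simp only [pos]; omega
  have b2 : pos n j n = pos n j i + (n - i) := by simp only [pos]; omega
  have b4 : pos n (j+1) (n-2) = pos n j i + (n - i) + (n-2) := by
    simp only [pos, Nat.add_sub_cancel]; omega
  have b5 : pos n (j+1) (i-1) = pos n j i + (n - 1) := by
    simp only [pos, Nat.add_sub_cancel]; omega
  have hne1 : (j : ℕ) + 1 ≠ j := by omega
  have hne2 : (j : ℕ) ≠ j + 1 := by omega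
  funext m
  simp only [betaF, if_neg hk0, kplus_pos n j i (by omega) hj hi hin,
    iota_pos n j i hi hin, hpn]
  simp only [betaD, Pi.add_apply, Pi.sub_apply, apply_ite (fun f : ℕ → ℚ => f m),
    Pi.zero_apply]
  by_cases hmid : pos n j i < m ∧ m < pos n j i + n
  · rw [if_neg (show m ≠ pos n j i by omega), if_neg (show m ≠ pos n j i + n by omega),
      if_pos hmid]
    obtain ⟨d, rfl⟩ : ∃ d, m = pos n j i + d := ⟨m - pos n j i, by omega⟩
    have hd1 : 1 ≤ d := by omega
    have hdn : d < n := by omega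
    by_cases hrow : i + d ≤ n
    · have hm : pos n j i + d = pos n j (i + d) := by simp only [pos]; omega
      have CA : ∀ a b, cX n a b (pos n j i + d) = if a = j ∧ b = i + d then 1 else 0 :=
        fun a b => by rw [hm]; exact cX_apply n a b _ _ hj (by omega) hrow
      rw [show iotaSeq n (pos n j i + d) = i + d by
        rw [hm]; exact iota_pos _ _ _ (by omega) hrow]
      simp only [CA, aD, eq_self_iff_true, true_and, and_true, if_neg hne1,
        if_neg (show ¬ (i = i + d) by omega), if_neg (show ¬ (i - 1 = i + d) by omega),
        if_neg (show ¬ ((j:ℕ)+1 = j ∧ i = i + d) by omega),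
        if_neg (show ¬ ((j:ℕ)+1 = j ∧ n - 2 = i + d) by omega),
        if_neg (show ¬ ((j:ℕ)+1 = j ∧ i - 1 = i + d) by omega)]
      split_ifs <;> first | (exfalso; omega) | norm_num
    · have hm : pos n j i + d = pos n (j+1) (i + d - n) := by
        simp only [pos, Nat.add_sub_cancel]; omega
      have CA : ∀ a b, cX n a b (pos n j i + d) =
          if a = j + 1 ∧ b = i + d - n then 1 else 0 :=
        fun a b => by rw [hm]; exact cX_apply n a b _ _ (by omega) (by omega) (by omega)
      rw [show iotaSeq n (pos n j i + d) = i + d - n by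
        rw [hm]; exact iota_pos _ _ _ (by omega) (by omega)]
      simp only [CA, aD, eq_self_iff_true, true_and, and_true,
        if_neg (show ¬ (i = i + d - n) by omega),
        if_neg (show ¬ ((j:ℕ) = j + 1 ∧ i = i + d - n) by omega),
        if_neg (show ¬ ((j:ℕ) = j + 1 ∧ i + 1 = i + d - n) by omega),
        if_neg (show ¬ ((j:ℕ) = j + 1 ∧ n = i + d - n) by omega)]
      split_ifs <;> first | (exfalso; omega) | norm_num
  · rw [if_neg hmid]
    by_cases hm1 : m = pos n j i
    · subst hm1
      have CA : ∀ a b, cX n a b (pos n j i) = if a = j ∧ b = i then 1 else 0 :=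
        fun a b => cX_apply n a b j i hj hi hin
      simp only [CA, eq_self_iff_true, true_and, and_true,
        if_neg (show ¬ ((j:ℕ)+1 = j ∧ i = i) by omega),
        if_neg (show ¬ ((i:ℕ) + 1 = i) by omega),
        if_neg (show ¬ ((j:ℕ)+1 = j ∧ n - 2 = i) by omega),
        if_neg (show ¬ ((j:ℕ)+1 = j ∧ i - 1 = i) by omega),
        if_pos (rfl : pos n j i = pos n j i)]
      split_ifs <;> first | (exfalso; omega) | norm_num
    · by_cases hm2 : m = pos n j i + n
      · rw [show m = pos n (j+1) i from by omega]
        have CA : ∀ a b, cX n a b (pos n (j+1) i) = if a = j + 1 ∧ b = i then 1 else 0 :=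
          fun a b => cX_apply n a b (j+1) i (by omega) hi hin
        simp only [CA, eq_self_iff_true, true_and, and_true,
          if_neg (show ¬ ((j:ℕ) = j + 1 ∧ i = i) by omega),
          if_neg (show ¬ ((j:ℕ) = j + 1 ∧ i + 1 = i) by omega),
          if_neg (show ¬ ((j:ℕ) = j + 1 ∧ n = i) by omega),
          if_neg (show ¬ (i - 1 = i) by omega),
          if_pos hpn, if_neg (show ¬ (pos n (j+1) i = pos n j i) by omega)]
        split_ifs <;> first | (exfalso; omega) | norm_num
      · have z1 : cX n j i m = 0 := by rw [cX_apply_raw]; exact if_neg (by omega)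
        have z2 : cX n (j+1) i m = 0 := by
          rw [cX_apply_raw]; exact if_neg (by rw [hpn]; omega)
        have z3 : cX n j (i+1) m = 0 := by
          rw [cX_apply_raw]; exact if_neg (by rw [b1]; omega)
        have z4 : cX n j n m = 0 := by
          rw [cX_apply_raw]; exact if_neg (by rw [b2]; omega)
        have z56 : (if i = n then cX n (j+1) (n-2) m else cX n (j+1) (i-1) m) = 0 := by
          split_ifs with h
          · rw [cX_apply_raw]; exact if_neg (by rw [b4]; omega)
          · rw [cX_apply_raw]; exact if_neg (by rw [b5]; omega)
        rw [if_neg hm1, if_neg hm2, z1, z2, z3, z4, z56]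
        simp

lemma Sop_pos (n j i : ℕ) (hn : 4 ≤ n) (hj : 1 ≤ j) (hi : 1 ≤ i) (hin : i ≤ n)
    (φ : ℕ → ℚ) (h : φ (pos n j i) = 1) :
    Sop (aD n) (iotaSeq n) (pos n j i) φ = φ - betaD n j i := by
  rw [Sop, if_pos (by rw [h]; norm_num), h, one_smul,
    betaF_pos_eq n j i hn hj hi hin]

def swapc (n j i : ℕ) : ℕ :=
  if j % 2 = 0 ∧ i = n - 1 then n else if j % 2 = 0 ∧ i = n then n - 1 else i

lemma capXD_eq (n j i : ℕ) : capXD n j i = cX n j (swapc n j i) := by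
  unfold capXD swapc; split_ifs <;> rfl

lemma swapc_low (n j i : ℕ) (h : i + 2 ≤ n) : swapc n j i = i := by
  unfold swapc; split_ifs <;> omega

lemma capXD_low (n j i : ℕ) (h : i + 2 ≤ n) : capXD n j i = cX n j i := by
  rw [capXD_eq, swapc_low n j i h]

lemma swapc_odd (n j i : ℕ) (h : j % 2 = 1) : swapc n j i = i := by
  unfold swapc; split_ifs <;> omega

lemma capXD_apply (n j i j' i' : ℕ) (hj' : 1 ≤ j') (hi' : 1 ≤ i') (hin' : i' ≤ n) :
    capXD n j i (pos n j' i') = if j = j' ∧ swapc n j i = i' then 1 else 0 := by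
  rw [capXD_eq]; exact cX_apply n j (swapc n j i) j' i' hj' hi' hin'

lemma chain1_formula (n : ℕ) (hn : 4 ≤ n) :
    ∀ t, t ≤ n - 2 → chain1D n t (XformD n) =
      (if 1 ≤ t then cX n 1 n else 0) + cX n (t+1) (n-2-t) - cX n (t+1) (n-1-t)
  | 0, h => by
      simp only [chain1D, id_eq, XformD, Nat.sub_zero]
      rw [if_neg (by omega)]
      abel
  | t+1, ht => by
      have hrec := chain1_formula n hn t (by omega)
      show Sop (aD n) (iotaSeq n) (pos n (t + 1) (n - 1 - (t + 1))) (chain1D n t (XformD n)) = _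
      rw [hrec]
      have e : n - 1 - (t+1) = n - 2 - t := by omega
      rw [e]
      have hcoef : ((if 1 ≤ t then cX n 1 n else 0) + cX n (t+1) (n-2-t) - cX n (t+1) (n-1-t))
          (pos n (t+1) (n-2-t)) = 1 := by
        simp only [Pi.add_apply, Pi.sub_apply,
          apply_ite (fun f : ℕ → ℚ => f (pos n (t+1) (n-2-t))), Pi.zero_apply]
        rw [cX_apply n 1 n (t+1) (n-2-t) (by omega) (by omega) (by omega),
          cX_apply n (t+1) (n-2-t) (t+1) (n-2-t) (by omega) (by omega) (by omega),
          cX_apply n (t+1) (n-1-t) (t+1) (n-2-t) (by omega) (by omega) (by omega),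
          if_neg (show ¬ ((1:ℕ) = t+1 ∧ n = n-2-t) by omega),
          if_pos (show t+1 = t+1 ∧ n-2-t = n-2-t from ⟨rfl, rfl⟩),
          if_neg (show ¬ (t+1 = t+1 ∧ n-1-t = n-2-t) by omega)]
        split_ifs <;> norm_num
      rw [Sop_pos n (t+1) (n-2-t) hn (by omega) (by omega) (by omega) _ hcoef]
      rw [if_pos (show (1:ℕ) ≤ t + 1 by omega)]
      rcases Nat.eq_zero_or_pos t with rfl | htpos
      · rw [if_neg (by omega), betaD,
          if_pos (show n-2-0+2 ≤ n by omega), if_pos (show n-2-0+2 = n by omega),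
          if_neg (show ¬ (n-2-0 = n) by omega)]
        rw [show n-2-0+1 = n-1-0 from by omega, show n-2-0-1 = n-2-(0+1) from by omega,
          show (0:ℕ)+1 = 1 from rfl]
        abel
      · rw [if_pos (show (1:ℕ) ≤ t by omega), betaD,
          if_pos (show n-2-t+2 ≤ n by omega), if_neg (show ¬ (n-2-t+2 = n) by omega),
          if_neg (show ¬ (n-2-t = n) by omega)]
        rw [show n-2-t+1 = n-1-t from by omega, show n-2-t-1 = n-2-(t+1) from by omega]
        abel

lemma chainK_formula (n k : ℕ) (hn : 4 ≤ n) (hk : 2 ≤ k) (M : ℕ) (hM : M + k ≤ n)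
    (C : ℕ → ℚ)
    (hC1 : C (pos n (k-1) (if k % 2 = 0 then n else n - 1)) = 0)
    (hC2 : ∀ s, 2 ≤ s → s ≤ M → C (pos n (k-1+s-1) (n-s)) = 0) :
    ∀ t, 1 ≤ t → t ≤ M → chainKD n k t (C + capXD n (k-1) n) =
      C + (if 2 ≤ t then capXD n k n else 0)
        + cX n (k-1+t) (n-1-t) - capXD n (k-1+t) (n-t) := by
  intro t
  induction t with
  | zero => intro h; omega
  | succ t ih =>
    intro h1 hle
    rcases Nat.eq_zero_or_pos t with rfl | htpos
    · show Sop (aD n) (iotaSeq n) (pos n (k-1) (if k % 2 = 0 then n else n - 1))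
          (C + capXD n (k-1) n) = _
      have hc1a : 1 ≤ (if k % 2 = 0 then n else n - 1) := by split_ifs <;> omega
      have hc1b : (if k % 2 = 0 then n else n - 1) ≤ n := by split_ifs <;> omega
      have hsw : swapc n (k-1) n = (if k % 2 = 0 then n else n - 1) := by
        unfold swapc; split_ifs <;> omega
      have hcoef : (C + capXD n (k-1) n) (pos n (k-1) (if k % 2 = 0 then n else n - 1)) = 1 := by
        rw [Pi.add_apply, hC1,
          capXD_apply n (k-1) n (k-1) _ (by omega) hc1a hc1b,
          if_pos ⟨rfl, hsw⟩]
        norm_num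
      rw [Sop_pos n (k-1) _ hn (by omega) hc1a hc1b _ hcoef]
      rw [if_neg (show ¬ (2:ℕ) ≤ 0 + 1 by omega)]
      rw [show k-1+(0+1) = k from by omega, show n-1-(0+1) = n-2 from by omega,
        show n-(0+1) = n-1 from by omega]
      by_cases hpar : k % 2 = 0
      · rw [if_pos hpar, betaD, if_neg (show ¬ n+2 ≤ n by omega),
          if_neg (show ¬ n+2 = n by omega), if_pos rfl,
          capXD_eq n (k-1) n, hsw, if_pos hpar,
          capXD_eq n k (n-1), show swapc n k (n-1) = n from by unfold swapc; split_ifs <;> omega,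
          show k-1+1 = k from by omega]
        abel
      · rw [if_neg hpar, betaD, if_neg (show ¬ n-1+2 ≤ n by omega),
          if_neg (show ¬ n-1+2 = n by omega), if_neg (show ¬ n-1 = n by omega),
          capXD_eq n (k-1) n, hsw, if_neg hpar,
          capXD_eq n k (n-1), show swapc n k (n-1) = n-1 from by unfold swapc; split_ifs <;> omega,
          show k-1+1 = k from by omega, show n-1-1 = n-2 from by omega]
        abel
    · obtain ⟨u, rfl⟩ : ∃ u, t = u + 1 := ⟨t-1, by omega⟩
      show Sop (aD n) (iotaSeq n) (pos n (k-1+(u+1)) (n-1-(u+1)))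
          (chainKD n k (u+1) (C + capXD n (k-1) n)) = _
      rw [ih (by omega) (by omega)]
      have hcb : 1 ≤ n-1-(u+1) := by omega
      have hcb2 : n-1-(u+1) ≤ n := by omega
      have hCp : C (pos n (k-1+(u+1)) (n-1-(u+1))) = 0 := by
        have h := hC2 (u+2) (by omega) (by omega)
        rwa [show k-1+(u+2)-1 = k-1+(u+1) from by omega,
          show n-(u+2) = n-1-(u+1) from by omega] at h
      have hcoef : (C + (if 2 ≤ u+1 then capXD n k n else 0)
          + cX n (k-1+(u+1)) (n-1-(u+1)) - capXD n (k-1+(u+1)) (n-(u+1)))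
          (pos n (k-1+(u+1)) (n-1-(u+1))) = 1 := by
        have hz : (if 2 ≤ u+1 then capXD n k n else (0:ℕ → ℚ)) (pos n (k-1+(u+1)) (n-1-(u+1))) = 0 := by
          split_ifs with h
          · rw [capXD_apply n k n _ _ (by omega) hcb hcb2]
            rw [if_neg (show ¬ (k = k-1+(u+1) ∧ swapc n k n = n-1-(u+1)) from by
              have : n-1 ≤ swapc n k n := by unfold swapc; split_ifs <;> omega
              omega)]
          · rfl
        rw [Pi.sub_apply, Pi.add_apply, Pi.add_apply, hCp, hz,
          cX_apply n (k-1+(u+1)) (n-1-(u+1)) _ _ (by omega) hcb hcb2,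
          if_pos (show k-1+(u+1) = k-1+(u+1) ∧ n-1-(u+1) = n-1-(u+1) from ⟨rfl, rfl⟩),
          capXD_apply n (k-1+(u+1)) (n-(u+1)) _ _ (by omega) hcb hcb2,
          if_neg (show ¬ (k-1+(u+1) = k-1+(u+1) ∧ swapc n (k-1+(u+1)) (n-(u+1)) = n-1-(u+1)) from by
            have : n-(u+1) ≤ swapc n (k-1+(u+1)) (n-(u+1)) := by
              unfold swapc; split_ifs <;> omega
            omega)]
        norm_num
      rw [Sop_pos n (k-1+(u+1)) (n-1-(u+1)) hn (by omega) hcb hcb2 _ hcoef]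
      rw [if_pos (show (2:ℕ) ≤ u+1+1 by omega)]
      rcases Nat.eq_zero_or_pos u with rfl | hupos
      · rw [if_neg (show ¬ (2:ℕ) ≤ 0+1 by omega)]
        rw [show k-1+(0+1) = k from by omega, show n-1-(0+1) = n-2 from by omega,
          show n-(0+1) = n-1 from by omega, show k-1+(0+1+1) = k+1 from by omega,
          show n-1-(0+1+1) = n-3 from by omega, show n-(0+1+1) = n-2 from by omega]
        rw [betaD, if_pos (show n-2+2 ≤ n by omega), if_pos (show n-2+2 = n by omega),
          if_neg (show ¬ n-2 = n by omega),
          show n-2+1 = n-1 from by omega, show n-2-1 = n-3 from by omega,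
          capXD_low n (k+1) (n-2) (by omega)]
        by_cases hpar : k % 2 = 0
        · rw [capXD_eq n k (n-1), show swapc n k (n-1) = n from by unfold swapc; split_ifs <;> omega,
            capXD_eq n k n, show swapc n k n = n-1 from by unfold swapc; split_ifs <;> omega]
          abel
        · rw [capXD_eq n k (n-1), show swapc n k (n-1) = n-1 from by unfold swapc; split_ifs <;> omega,
            capXD_eq n k n, show swapc n k n = n from by unfold swapc; split_ifs <;> omega]
          abel
      · rw [if_pos (show (2:ℕ) ≤ u+1 by omega)]
        rw [betaD, if_pos (show n-1-(u+1)+2 ≤ n by omega),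
          if_neg (show ¬ n-1-(u+1)+2 = n by omega),
          if_neg (show ¬ n-1-(u+1) = n by omega)]
        rw [capXD_low n (k-1+(u+1)) (n-(u+1)) (by omega),
          capXD_low n (k-1+(u+1+1)) (n-(u+1+1)) (by omega)]
        rw [show n-1-(u+1)+1 = n-(u+1) from by omega,
          show k-1+(u+1)+1 = k-1+(u+1+1) from by omega,
          show n-1-(u+1)-1 = n-1-(u+1+1) from by omega,
          show n-(u+1+1) = n-1-(u+1) from by omega]
        abel

lemma mu_pos (μ : ℕ → ℕ) (m : ℕ) (hμ : AdmissiblePat m μ) (L : ℕ) (hL : μ L ≠ 0) :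
    ∀ j, 1 ≤ j → j ≤ L → 1 ≤ μ j := by
  have key : ∀ d j, 1 ≤ j → j + d = L → 1 ≤ μ j := by
    intro d
    induction d with
    | zero =>
      intro j hj hd
      have : j = L := by omega
      subst this; omega
    | succ d ihd =>
      intro j hj hd
      have h2 := ihd (j+1) (by omega) (by omega)
      rcases hμ.2.2 (j+1) (by omega) with h | h
      · omega
      · rw [show (j+1) - 1 = j from by omega] at h; omega
  intro j hj hjL
  exact key (L - j) j hj (by omega)

lemma mu_mono (μ : ℕ → ℕ) (m : ℕ) (hμ : AdmissiblePat m μ) (L : ℕ) (hL : μ L ≠ 0) :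
    ∀ b a, 1 ≤ a → a ≤ b → b ≤ L → μ b + b ≤ μ a + a := by
  have hpos := mu_pos μ m hμ L hL
  intro b
  induction b with
  | zero => intro a _ _ _; omega
  | succ b ihb =>
    intro a ha hab hbL
    rcases Nat.eq_or_lt_of_le hab with heq | hlt
    · rw [← heq]
    · have h1 := ihb a ha (by omega) (by omega)
      rcases hμ.2.2 (b+1) (by omega) with h | h
      · have := hpos (b+1) (by omega) hbL; omega
      · rw [show (b+1) - 1 = b from by omega] at h; omega

lemma auxD (n : ℕ) (hn : 4 ≤ n) (μ : ℕ → ℕ) (hμ : AdmissiblePat (n-1) μ) :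
    ∀ L, 1 ≤ L → μ L ≠ 0 →
    phiMuD n μ L (XformD n) =
      (∑ k ∈ Finset.Icc 1 L,
        (capXD n (μ k + k - 1) (n - μ k - 1) - capXD n (μ k + k - 1) (n - μ k)))
      + (if 2 ≤ μ L then capXD n L n else 0) := by
  intro L
  induction L with
  | zero => intro h; omega
  | succ L ihL =>
    intro hL0 hL1
    have hpos := mu_pos μ (n-1) hμ (L+1) hL1
    have hmono := mu_mono μ (n-1) hμ (L+1) hL1
    rcases Nat.eq_zero_or_pos L with rfl | hLpos
    · rw [show (0:ℕ)+1 = 1 from by omega]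
      rw [Finset.Icc_self 1, Finset.sum_singleton]
      show (if μ 1 = 1 then XformD n else chain1D n (μ 1 - 1) (XformD n)) = _
      by_cases h1 : μ 1 = 1
      · rw [if_pos h1, h1]
        rw [show (1:ℕ)+1-1 = 1 from rfl]
        rw [capXD_eq n 1 (n-1-1), swapc_odd n 1 (n-1-1) (by norm_num),
            capXD_eq n 1 (n-1), swapc_odd n 1 (n-1) (by norm_num),
            if_neg (show ¬ (2:ℕ) ≤ 1 by omega)]
        rw [XformD, show n-1-1 = n-2 from by omega]
        abel
      · have h2 : 2 ≤ μ 1 := by have := hpos 1 (le_refl 1) (by omega); omega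
        have hb1 : μ 1 ≤ n - 1 := hμ.2.1
        rw [if_neg h1, chain1_formula n hn (μ 1 - 1) (by omega)]
        rw [if_pos (show 1 ≤ μ 1 - 1 by omega), if_pos h2]
        rw [show μ 1 - 1 + 1 = μ 1 from by omega,
          show n-2-(μ 1 - 1) = n - μ 1 - 1 from by omega,
          show n-1-(μ 1 - 1) = n - μ 1 from by omega,
          show μ 1 + 1 - 1 = μ 1 from by omega,
          capXD_low n (μ 1) (n - μ 1 - 1) (by omega),
          capXD_low n (μ 1) (n - μ 1) (by omega),
          capXD_eq n 1 n, swapc_odd n 1 n (by norm_num)]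
        abel
    · obtain ⟨P, rfl⟩ : ∃ P, L = P + 1 := ⟨L-1, by omega⟩
      have hL1' : μ (P+2) ≠ 0 := hL1
      have hm1 : 1 ≤ μ (P+2) := by omega
      have hm2 : 2 ≤ μ (P+1) := by
        rcases hμ.2.2 (P+2) (by omega) with h | h
        · omega
        · rw [show (P+2) - 1 = P+1 from by omega] at h; omega
      have hb : μ (P+2) + (P+2) ≤ n := by
        have h := hmono (P+2) 1 (by omega) (by omega) (by omega)
        have := hμ.2.1; omega
      show chainKD n (P+2) (μ (P+2)) (phiMuD n μ (P+1) (XformD n)) =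
        (∑ k ∈ Finset.Icc 1 (P+2),
          (capXD n (μ k + k - 1) (n - μ k - 1) - capXD n (μ k + k - 1) (n - μ k)))
        + (if 2 ≤ μ (P+2) then capXD n (P+2) n else 0)
      rw [ihL (by omega) (by omega), if_pos hm2]
      rw [show capXD n (P+1) n = capXD n ((P+2)-1) n from rfl]
      set C := (∑ k ∈ Finset.Icc 1 (P+1),
        (capXD n (μ k + k - 1) (n - μ k - 1) - capXD n (μ k + k - 1) (n - μ k))) with hC
      have hC1' : C (pos n ((P+2)-1) (if (P+2) % 2 = 0 then n else n - 1)) = 0 := by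
        have hc1a : n-1 ≤ (if (P+2) % 2 = 0 then n else n-1) := by split_ifs <;> omega
        have hc1b : (if (P+2) % 2 = 0 then n else n-1) ≤ n := by split_ifs <;> omega
        rw [hC, Finset.sum_apply]
        apply Finset.sum_eq_zero
        intro x hx
        rw [Finset.mem_Icc] at hx
        have hpx := hpos x (by omega) (by omega)
        have hmx := hmono (P+2) x (by omega) (by omega) (by omega)
        rw [Pi.sub_apply,
          capXD_apply n (μ x + x - 1) (n - μ x - 1) _ _ (by omega) (by omega) hc1b,
          capXD_apply n (μ x + x - 1) (n - μ x) _ _ (by omega) (by omega) hc1b,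
          swapc_low n _ _ (by omega), swapc_low n _ _ (by omega),
          if_neg (by omega), if_neg (by omega)]
        norm_num
      have hC2' : ∀ s, 2 ≤ s → s ≤ μ (P+2) →
          C (pos n ((P+2)-1+s-1) (n-s)) = 0 := by
        intro s hs1 hs2
        rw [hC, Finset.sum_apply]
        apply Finset.sum_eq_zero
        intro x hx
        rw [Finset.mem_Icc] at hx
        have hpx := hpos x (by omega) (by omega)
        have hmx := hmono (P+2) x (by omega) (by omega) (by omega)
        rw [Pi.sub_apply,
          capXD_apply n (μ x + x - 1) (n - μ x - 1) _ _ (by omega) (by omega) (by omega),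
          capXD_apply n (μ x + x - 1) (n - μ x) _ _ (by omega) (by omega) (by omega),
          swapc_low n _ _ (by omega), swapc_low n _ _ (by omega),
          if_neg (by omega), if_neg (by omega)]
        norm_num
      rw [chainK_formula n (P+2) hn (by omega) (μ (P+2)) hb C hC1' hC2' (μ (P+2)) hm1 (le_refl _)]
      rw [Finset.sum_Icc_succ_top (show (1:ℕ) ≤ P+2 by omega), ← hC]
      rw [show (P+2:ℕ)-1+(μ (P+2)) = μ (P+2) + (P+2) - 1 from by omega,
        show n-1-(μ (P+2)) = n - μ (P+2) - 1 from by omega,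
        capXD_low n (μ (P+2) + (P+2) - 1) (n - μ (P+2) - 1) (by omega)]
      abel

theorem typeD_phiMu_explicit (n : ℕ) (hn : 4 ≤ n) (μ : ℕ → ℕ)
    (hμ : AdmissiblePat (n - 1) μ) (L : ℕ) (hL0 : 1 ≤ L) (hL1 : μ L ≠ 0)
    (hL2 : ∀ k, L < k → μ k = 0) :
    phiMuD n μ L (XformD n) =
      (∑ k ∈ Finset.Icc 1 L,
        (capXD n (μ k + k - 1) (n - μ k - 1) - capXD n (μ k + k - 1) (n - μ k)))
      + (if 2 ≤ μ L then capXD n L n else 0) := auxD n hn μ hμ L hL0 hL1
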